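/- Let A be a quasi-cocommutative quasitriangular K[[ℏ]]-bialgebra with R-matrix R_A ∈ 1 + ℏ A^{⊗2}, and suppose A is torsion-free. Set A₀ = A/ℏA and r = ((R_A − 1)/ℏ mod ℏ) ∈ A₀^{⊗2}. Then: (i) (Δ₀⊗id)(r) = r^{13} + r^{23} and (id⊗Δ₀)(r) = r^{12} + r^{13}; (ii) r satisfies the classical Yang–Baxter equation [r^{12},r^{13}] + [r^{12},r^{23}] + [r^{13},r^{23}] = 0; (iii) t = r + r^{21} satisfies [t, Δ₀(x)] = 0 for all x ∈ A₀. -/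

import Mathlib

open TensorProduct

noncomputable section

variable (K : Type*) [Field K] [CharZero K]
variable (A : Type*) [Ring A] [Bialgebra (PowerSeries K) A]

/-- `x ⊗ y ↦ x ⊗ y ⊗ 1`. -/
def e12 : A ⊗[PowerSeries K] A →ₗ[PowerSeries K] A ⊗[PowerSeries K] (A ⊗[PowerSeries K] A) :=
  TensorProduct.map LinearMap.id ((TensorProduct.mk (PowerSeries K) A A).flip 1)

/-- `t ↦ 1 ⊗ t`. -/
def e23 : A ⊗[PowerSeries K] A →ₗ[PowerSeries K] A ⊗[PowerSeries K] (A ⊗[PowerSeries K] A) :=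
  TensorProduct.mk (PowerSeries K) A (A ⊗[PowerSeries K] A) 1

/-- `x ⊗ y ↦ x ⊗ 1 ⊗ y`. -/
def e13 : A ⊗[PowerSeries K] A →ₗ[PowerSeries K] A ⊗[PowerSeries K] (A ⊗[PowerSeries K] A) :=
  (TensorProduct.map LinearMap.id (TensorProduct.comm (PowerSeries K) A A).toLinearMap) ∘ₗ
    e12 K A

/-- The flip of `A ⊗ A`. -/
def tau : A ⊗[PowerSeries K] A →ₗ[PowerSeries K] A ⊗[PowerSeries K] A :=
  (TensorProduct.comm (PowerSeries K) A A).toLinearMap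

/-- `Δ ⊗ id : A ⊗ A → A ⊗ (A ⊗ A)`. -/
def D1 : A ⊗[PowerSeries K] A →ₗ[PowerSeries K] A ⊗[PowerSeries K] (A ⊗[PowerSeries K] A) :=
  (TensorProduct.assoc (PowerSeries K) A A A).toLinearMap ∘ₗ
    TensorProduct.map Coalgebra.comul LinearMap.id

/-- `id ⊗ Δ : A ⊗ A → A ⊗ (A ⊗ A)`. -/
def D2 : A ⊗[PowerSeries K] A →ₗ[PowerSeries K] A ⊗[PowerSeries K] (A ⊗[PowerSeries K] A) :=
  TensorProduct.map LinearMap.id Coalgebra.comul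

set_option linter.unusedSectionVars false

local notation "𝕊" => PowerSeries K

lemma e12_tmul (a b : A) : e12 K A (a ⊗ₜ b) = a ⊗ₜ (b ⊗ₜ (1:A)) := rfl

lemma e23_apply (u : A ⊗[𝕊] A) : e23 K A u = (1:A) ⊗ₜ u := rfl

lemma e13_tmul (a b : A) : e13 K A (a ⊗ₜ b) = a ⊗ₜ ((1:A) ⊗ₜ b) := rfl

lemma tau_tmul (a b : A) : tau K A (a ⊗ₜ b) = b ⊗ₜ a := rfl

/-- algebra version of `e12` -/
def E12 : A ⊗[𝕊] A →ₐ[𝕊] A ⊗[𝕊] (A ⊗[𝕊] A) :=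
  Algebra.TensorProduct.map (AlgHom.id 𝕊 A) Algebra.TensorProduct.includeLeft

/-- algebra version of `e13` -/
def E13 : A ⊗[𝕊] A →ₐ[𝕊] A ⊗[𝕊] (A ⊗[𝕊] A) :=
  Algebra.TensorProduct.map (AlgHom.id 𝕊 A) Algebra.TensorProduct.includeRight

/-- algebra version of `e23` -/
def E23 : A ⊗[𝕊] A →ₐ[𝕊] A ⊗[𝕊] (A ⊗[𝕊] A) :=
  Algebra.TensorProduct.includeRight

/-- algebra version of `tau` -/
def TauA : A ⊗[𝕊] A ≃ₐ[𝕊] A ⊗[𝕊] A := Algebra.TensorProduct.comm 𝕊 A A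

lemma e12_eq (u : A ⊗[𝕊] A) : e12 K A u = E12 K A u := by
  induction u using TensorProduct.induction_on with
  | zero => simp
  | tmul a b => simp [e12_tmul, E12]
  | add x y hx hy => simp [hx, hy]

lemma e13_eq (u : A ⊗[𝕊] A) : e13 K A u = E13 K A u := by
  induction u using TensorProduct.induction_on with
  | zero => simp
  | tmul a b => simp [e13_tmul, E13]
  | add x y hx hy => simp [hx, hy]

lemma e23_eq (u : A ⊗[𝕊] A) : e23 K A u = E23 K A u := by
  induction u using TensorProduct.induction_on with
  | zero => simp
  | tmul a b => simp [e23_apply, E23]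
  | add x y hx hy => rw [map_add, hx, hy, map_add]

lemma tau_eq (u : A ⊗[𝕊] A) : tau K A u = TauA K A u := by
  induction u using TensorProduct.induction_on with
  | zero => simp
  | tmul a b => simp [tau_tmul, TauA]
  | add x y hx hy => simp [hx, hy]

lemma tau_mul (u v : A ⊗[𝕊] A) : tau K A (u * v) = tau K A u * tau K A v := by
  rw [tau_eq, tau_eq, tau_eq, map_mul]

lemma tau_one : tau K A 1 = 1 := by rw [tau_eq]; exact map_one _

lemma tau_tau (u : A ⊗[𝕊] A) : tau K A (tau K A u) = u := by
  induction u using TensorProduct.induction_on with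
  | zero => simp
  | tmul a b => rw [tau_tmul, tau_tmul]
  | add x y hx hy => rw [map_add, map_add, hx, hy]

/-- auxiliary map `u ⊗ b ↦ assoc (u ⊗ b)` -/
def F (u : A ⊗[𝕊] A) (b : A) : A ⊗[𝕊] (A ⊗[𝕊] A) :=
  Algebra.TensorProduct.assoc 𝕊 𝕊 𝕊 A A A (u ⊗ₜ b)

lemma F_add (u v : A ⊗[𝕊] A) (b : A) : F K A (u + v) b = F K A u b + F K A v b := by
  unfold F; rw [add_tmul, map_add]

lemma F_smul (c : 𝕊) (u : A ⊗[𝕊] A) (b : A) : F K A (c • u) b = c • F K A u b := by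
  unfold F; rw [← smul_tmul', map_smul]

lemma F_one : F K A 1 1 = 1 := by
  unfold F; rw [← Algebra.TensorProduct.one_def, map_one]

lemma e12_assoc (u : A ⊗[𝕊] A) :
    e12 K A u = Algebra.TensorProduct.assoc 𝕊 𝕊 𝕊 A A A (u ⊗ₜ (1:A)) := by
  induction u using TensorProduct.induction_on with
  | zero => simp
  | tmul a b => simp [e12_tmul]
  | add x y hx hy => simp [add_tmul, hx, hy]

lemma e12F (u w : A ⊗[𝕊] A) (b : A) : e12 K A u * F K A w b = F K A (u * w) b := by
  rw [e12_assoc, F, F, ← map_mul, Algebra.TensorProduct.tmul_mul_tmul, one_mul]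

lemma Fe12 (w : A ⊗[𝕊] A) (b : A) (u : A ⊗[𝕊] A) :
    F K A w b * e12 K A u = F K A (w * u) b := by
  rw [e12_assoc, F, F, ← map_mul, Algebra.TensorProduct.tmul_mul_tmul, mul_one]

lemma D1_tmul (a b : A) : D1 K A (a ⊗ₜ b) = F K A (Coalgebra.comul a) b := by
  simp only [D1, LinearMap.comp_apply, TensorProduct.map_tmul, LinearMap.id_apply]
  rfl

lemma D1_one : D1 K A 1 = 1 := by
  rw [Algebra.TensorProduct.one_def, D1_tmul, Bialgebra.comul_one, F_one]

lemma D2_one : D2 K A 1 = 1 := by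
  rw [Algebra.TensorProduct.one_def]
  simp only [D2, TensorProduct.map_tmul, LinearMap.id_apply, Bialgebra.comul_one]
  rw [← Algebra.TensorProduct.one_def]

/-- `Δᵒᵖ ⊗ id`. -/
def D1op : A ⊗[𝕊] A →ₗ[𝕊] A ⊗[𝕊] (A ⊗[𝕊] A) :=
  (TensorProduct.assoc 𝕊 A A A).toLinearMap ∘ₗ
    TensorProduct.map (tau K A ∘ₗ Coalgebra.comul) LinearMap.id

lemma D1op_tmul (a b : A) :
    D1op K A (a ⊗ₜ b) = F K A (tau K A (Coalgebra.comul a)) b := by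
  simp only [D1op, LinearMap.comp_apply, TensorProduct.map_tmul, LinearMap.id_apply]
  rfl

/-- swap of the first two factors of `A ⊗ (A ⊗ A)` as an algebra automorphism -/
def T12 : A ⊗[𝕊] (A ⊗[𝕊] A) ≃ₐ[𝕊] A ⊗[𝕊] (A ⊗[𝕊] A) :=
  ((Algebra.TensorProduct.assoc 𝕊 𝕊 𝕊 A A A).symm.trans
    (Algebra.TensorProduct.congr (Algebra.TensorProduct.comm 𝕊 A A) AlgEquiv.refl)).trans
    (Algebra.TensorProduct.assoc 𝕊 𝕊 𝕊 A A A)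

lemma T12_tmul (a b c : A) : T12 K A (a ⊗ₜ (b ⊗ₜ c)) = b ⊗ₜ (a ⊗ₜ c) := by
  simp [T12, Algebra.TensorProduct.congr]

lemma T12_F (u : A ⊗[𝕊] A) (b : A) :
    T12 K A (F K A u b) = F K A (tau K A u) b := by
  induction u using TensorProduct.induction_on with
  | zero => simp [F]
  | tmul c d =>
      have h1 : F K A (c ⊗ₜ d) b = c ⊗ₜ (d ⊗ₜ b) := by
        simp [F]
      have h2 : F K A (d ⊗ₜ c) b = d ⊗ₜ (c ⊗ₜ b) := by
        simp [F]
      rw [h1, tau_tmul, h2, T12_tmul]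
  | add x y hx hy => rw [F_add, map_add, hx, hy, map_add, F_add]

lemma T12_D1 (w : A ⊗[𝕊] A) : T12 K A (D1 K A w) = D1op K A w := by
  induction w using TensorProduct.induction_on with
  | zero => simp
  | tmul a b => rw [D1_tmul, T12_F, D1op_tmul]
  | add x y hx hy => rw [map_add, map_add, hx, hy, map_add]

lemma T12_e13 (u : A ⊗[𝕊] A) : T12 K A (e13 K A u) = e23 K A u := by
  induction u using TensorProduct.induction_on with
  | zero => simp
  | tmul a b => rw [e13_tmul, T12_tmul, e23_apply]
  | add x y hx hy => rw [map_add, map_add, hx, hy, map_add]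

lemma T12_e23 (u : A ⊗[𝕊] A) : T12 K A (e23 K A u) = e13 K A u := by
  induction u using TensorProduct.induction_on with
  | zero => simp
  | tmul a b => rw [e23_apply, T12_tmul, e13_tmul]
  | add x y hx hy => rw [map_add, map_add, hx, hy, map_add]

lemma claimA (ρ : A ⊗[𝕊] A)
    (hqt3 : ∀ x : A,
      tau K A (Coalgebra.comul x) * (1 + (PowerSeries.X : 𝕊) • ρ) =
        (1 + (PowerSeries.X : 𝕊) • ρ) * Coalgebra.comul x)
    (w : A ⊗[𝕊] A) :
    (1 + (PowerSeries.X : 𝕊) • e12 K A ρ) * D1 K A w =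
      D1op K A w * (1 + (PowerSeries.X : 𝕊) • e12 K A ρ) := by
  induction w using TensorProduct.induction_on with
  | zero => simp
  | tmul a b =>
      rw [D1_tmul, D1op_tmul]
      calc (1 + (PowerSeries.X : 𝕊) • e12 K A ρ) * F K A (Coalgebra.comul a) b
          = F K A (Coalgebra.comul a) b
              + (PowerSeries.X : 𝕊) • (e12 K A ρ * F K A (Coalgebra.comul a) b) := by
            rw [add_mul, one_mul, smul_mul_assoc]
        _ = F K A ((1 + (PowerSeries.X : 𝕊) • ρ) * Coalgebra.comul a) b := by
            rw [e12F, add_mul, one_mul, smul_mul_assoc, F_add, F_smul]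
        _ = F K A (tau K A (Coalgebra.comul a) * (1 + (PowerSeries.X : 𝕊) • ρ)) b := by
            rw [hqt3 a]
        _ = F K A (tau K A (Coalgebra.comul a)) b
              + (PowerSeries.X : 𝕊) • (F K A (tau K A (Coalgebra.comul a)) b * e12 K A ρ) := by
            rw [mul_add, mul_one, mul_smul_comm, F_add, F_smul, Fe12]
        _ = F K A (tau K A (Coalgebra.comul a)) b * (1 + (PowerSeries.X : 𝕊) • e12 K A ρ) := by
            rw [mul_add, mul_one, mul_smul_comm]
  | add x y hx hy =>
      rw [map_add, map_add, mul_add, hx, hy, add_mul]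

lemma qybe (ρ : A ⊗[𝕊] A)
    (hqt1 : D1 K A (1 + (PowerSeries.X : 𝕊) • ρ) =
      (1 + (PowerSeries.X : 𝕊) • e13 K A ρ) * (1 + (PowerSeries.X : 𝕊) • e23 K A ρ))
    (hqt3 : ∀ x : A, tau K A (Coalgebra.comul x) * (1 + (PowerSeries.X : 𝕊) • ρ) =
        (1 + (PowerSeries.X : 𝕊) • ρ) * Coalgebra.comul x) :
    (1 + (PowerSeries.X : 𝕊) • e12 K A ρ) *
      ((1 + (PowerSeries.X : 𝕊) • e13 K A ρ) * (1 + (PowerSeries.X : 𝕊) • e23 K A ρ)) =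
    ((1 + (PowerSeries.X : 𝕊) • e23 K A ρ) * (1 + (PowerSeries.X : 𝕊) • e13 K A ρ)) *
      (1 + (PowerSeries.X : 𝕊) • e12 K A ρ) := by
  have h1 := claimA K A ρ hqt3 (1 + (PowerSeries.X : 𝕊) • ρ)
  rw [hqt1] at h1
  have h2 : D1op K A (1 + (PowerSeries.X : 𝕊) • ρ) =
      (1 + (PowerSeries.X : 𝕊) • e23 K A ρ) * (1 + (PowerSeries.X : 𝕊) • e13 K A ρ) := by
    rw [← T12_D1, hqt1, map_mul]
    rw [map_add, map_one, map_smul, T12_e13, map_add, map_one, map_smul, T12_e23]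
  rw [h2] at h1
  exact h1


set_option maxHeartbeats 2000000 in
/- Let `A` be a quasi-cocommutative quasitriangular torsion-free `K[[ℏ]]`-bialgebra with
R-matrix `R = 1 + ℏρ`.  Writing `r = ρ mod ℏ ∈ A₀^{⊗2}`, `A₀ = A/ℏA`, one has:
(i) `(Δ₀⊗id)(r) = r^{13} + r^{23}` and `(id⊗Δ₀)(r) = r^{12} + r^{13}`;
(ii) `CYB(r) = 0`;  (iii) `[r + r^{21}, Δ₀(x)] = 0` for all `x`.
All conclusions are expressed in `A` itself as congruences mod `ℏ`. -/
theorem stmt8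
    (htf2 : ∀ z : A ⊗[PowerSeries K] A, (PowerSeries.X : PowerSeries K) • z = 0 → z = 0)
    (htf3 : ∀ z : A ⊗[PowerSeries K] (A ⊗[PowerSeries K] A),
      (PowerSeries.X : PowerSeries K) • z = 0 → z = 0)
    (ρ : A ⊗[PowerSeries K] A)
    -- `R = 1 + ℏρ` is invertible
    (hinv : ∃ Rinv : A ⊗[PowerSeries K] A,
      (1 + (PowerSeries.X : PowerSeries K) • ρ) * Rinv = 1 ∧
      Rinv * (1 + (PowerSeries.X : PowerSeries K) • ρ) = 1)
    -- `(Δ⊗id)(R) = R^{13} R^{23}`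
    (hqt1 : D1 K A (1 + (PowerSeries.X : PowerSeries K) • ρ) =
      (1 + (PowerSeries.X : PowerSeries K) • e13 K A ρ) *
        (1 + (PowerSeries.X : PowerSeries K) • e23 K A ρ))
    -- `(id⊗Δ)(R) = R^{13} R^{12}`
    (hqt2 : D2 K A (1 + (PowerSeries.X : PowerSeries K) • ρ) =
      (1 + (PowerSeries.X : PowerSeries K) • e13 K A ρ) *
        (1 + (PowerSeries.X : PowerSeries K) • e12 K A ρ))
    -- `Δ^{op}(x) R = R Δ(x)`
    (hqt3 : ∀ x : A,
      tau K A (Coalgebra.comul x) * (1 + (PowerSeries.X : PowerSeries K) • ρ) =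
        (1 + (PowerSeries.X : PowerSeries K) • ρ) * Coalgebra.comul x) :
    -- (i)
    (∃ z, D1 K A ρ - (e13 K A ρ + e23 K A ρ) = (PowerSeries.X : PowerSeries K) • z) ∧
    (∃ z, D2 K A ρ - (e12 K A ρ + e13 K A ρ) = (PowerSeries.X : PowerSeries K) • z) ∧
    -- (ii)  CYB(ρ) ≡ 0 mod ℏ
    (∃ z, (e12 K A ρ * e13 K A ρ - e13 K A ρ * e12 K A ρ) +
        (e12 K A ρ * e23 K A ρ - e23 K A ρ * e12 K A ρ) +
        (e13 K A ρ * e23 K A ρ - e23 K A ρ * e13 K A ρ) =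
        (PowerSeries.X : PowerSeries K) • z) ∧
    -- (iii)
    (∀ x : A, ∃ z,
      (ρ + tau K A ρ) * Coalgebra.comul x - Coalgebra.comul x * (ρ + tau K A ρ) =
        (PowerSeries.X : PowerSeries K) • z) := by
  refine ⟨?_, ?_, ?_, ?_⟩
  · -- (i) first half
    refine ⟨e13 K A ρ * e23 K A ρ, ?_⟩
    have e1 : (1 : A ⊗[PowerSeries K] (A ⊗[PowerSeries K] A)) +
        (PowerSeries.X : PowerSeries K) • D1 K A ρ =
        (1 + (PowerSeries.X : PowerSeries K) • e13 K A ρ) *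
          (1 + (PowerSeries.X : PowerSeries K) • e23 K A ρ) := by
      rw [← hqt1, map_add, map_smul, D1_one]
    have h1 : (PowerSeries.X : PowerSeries K) •
        (D1 K A ρ - (e13 K A ρ + e23 K A ρ) -
          (PowerSeries.X : PowerSeries K) • (e13 K A ρ * e23 K A ρ)) =
        ((1 : A ⊗[PowerSeries K] (A ⊗[PowerSeries K] A)) +
            (PowerSeries.X : PowerSeries K) • D1 K A ρ) -
          (1 + (PowerSeries.X : PowerSeries K) • e13 K A ρ) *
            (1 + (PowerSeries.X : PowerSeries K) • e23 K A ρ) := by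
      simp only [mul_add, add_mul, one_mul, mul_one, smul_mul_assoc, mul_smul_comm,
        smul_sub, smul_add, smul_smul]
      abel
    rw [e1, sub_self] at h1
    exact sub_eq_zero.mp (htf3 _ h1)
  · -- (i) second half
    refine ⟨e13 K A ρ * e12 K A ρ, ?_⟩
    have e1 : (1 : A ⊗[PowerSeries K] (A ⊗[PowerSeries K] A)) +
        (PowerSeries.X : PowerSeries K) • D2 K A ρ =
        (1 + (PowerSeries.X : PowerSeries K) • e13 K A ρ) *
          (1 + (PowerSeries.X : PowerSeries K) • e12 K A ρ) := by
      rw [← hqt2, map_add, map_smul, D2_one]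
    have h1 : (PowerSeries.X : PowerSeries K) •
        (D2 K A ρ - (e12 K A ρ + e13 K A ρ) -
          (PowerSeries.X : PowerSeries K) • (e13 K A ρ * e12 K A ρ)) =
        ((1 : A ⊗[PowerSeries K] (A ⊗[PowerSeries K] A)) +
            (PowerSeries.X : PowerSeries K) • D2 K A ρ) -
          (1 + (PowerSeries.X : PowerSeries K) • e13 K A ρ) *
            (1 + (PowerSeries.X : PowerSeries K) • e12 K A ρ) := by
      simp only [mul_add, add_mul, one_mul, mul_one, smul_mul_assoc, mul_smul_comm,
        smul_sub, smul_add, smul_smul]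
      abel
    rw [e1, sub_self] at h1
    exact sub_eq_zero.mp (htf3 _ h1)
  · -- (ii)
    refine ⟨(e23 K A ρ * e13 K A ρ) * e12 K A ρ - e12 K A ρ * (e13 K A ρ * e23 K A ρ), ?_⟩
    have hq := qybe K A ρ hqt1 hqt3
    have h1 : (PowerSeries.X : PowerSeries K) • ((PowerSeries.X : PowerSeries K) •
        ((e12 K A ρ * e13 K A ρ - e13 K A ρ * e12 K A ρ) +
          (e12 K A ρ * e23 K A ρ - e23 K A ρ * e12 K A ρ) +
          (e13 K A ρ * e23 K A ρ - e23 K A ρ * e13 K A ρ) -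
          (PowerSeries.X : PowerSeries K) •
            ((e23 K A ρ * e13 K A ρ) * e12 K A ρ - e12 K A ρ * (e13 K A ρ * e23 K A ρ)))) =
        (1 + (PowerSeries.X : PowerSeries K) • e12 K A ρ) *
          ((1 + (PowerSeries.X : PowerSeries K) • e13 K A ρ) *
            (1 + (PowerSeries.X : PowerSeries K) • e23 K A ρ)) -
        ((1 + (PowerSeries.X : PowerSeries K) • e23 K A ρ) *
            (1 + (PowerSeries.X : PowerSeries K) • e13 K A ρ)) *
          (1 + (PowerSeries.X : PowerSeries K) • e12 K A ρ) := by
      simp only [mul_add, add_mul, one_mul, mul_one, smul_mul_assoc, mul_smul_comm,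
        smul_sub, smul_add, smul_smul, mul_assoc]
      abel
    rw [hq, sub_self] at h1
    exact sub_eq_zero.mp (htf3 _ (htf3 _ h1))
  · -- (iii)
    intro x
    have hv := hqt3 x
    have h2 : Coalgebra.comul x * (1 + (PowerSeries.X : PowerSeries K) • tau K A ρ) =
        (1 + (PowerSeries.X : PowerSeries K) • tau K A ρ) * tau K A (Coalgebra.comul x) := by
      have h := congrArg (tau K A) hv
      rw [tau_mul, tau_mul, tau_tau, map_add, map_smul, tau_one] at h
      exact h
    have E1 : tau K A (Coalgebra.comul x) +
        (PowerSeries.X : PowerSeries K) • (tau K A (Coalgebra.comul x) * ρ) =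
        Coalgebra.comul x + (PowerSeries.X : PowerSeries K) • (ρ * Coalgebra.comul x) := by
      simpa only [mul_add, mul_one, mul_smul_comm, add_mul, one_mul, smul_mul_assoc] using hv
    have E2 : Coalgebra.comul x +
        (PowerSeries.X : PowerSeries K) • (Coalgebra.comul x * tau K A ρ) =
        tau K A (Coalgebra.comul x) +
          (PowerSeries.X : PowerSeries K) • (tau K A ρ * tau K A (Coalgebra.comul x)) := by
      simpa only [mul_add, mul_one, mul_smul_comm, add_mul, one_mul, smul_mul_assoc] using h2
    have E1r : tau K A (Coalgebra.comul x) * ρ +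
        (PowerSeries.X : PowerSeries K) • ((tau K A (Coalgebra.comul x) * ρ) * ρ) =
        Coalgebra.comul x * ρ +
          (PowerSeries.X : PowerSeries K) • ((ρ * Coalgebra.comul x) * ρ) := by
      have := congrArg (fun t => t * ρ) E1
      simpa only [add_mul, smul_mul_assoc] using this
    have E1l : tau K A ρ * tau K A (Coalgebra.comul x) +
        (PowerSeries.X : PowerSeries K) • (tau K A ρ * (tau K A (Coalgebra.comul x) * ρ)) =
        tau K A ρ * Coalgebra.comul x +
          (PowerSeries.X : PowerSeries K) • (tau K A ρ * (ρ * Coalgebra.comul x)) := by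
      have := congrArg (fun t => tau K A ρ * t) E1
      simpa only [mul_add, mul_smul_comm] using this
    refine ⟨(ρ * Coalgebra.comul x) * ρ - (tau K A (Coalgebra.comul x) * ρ) * ρ -
      (tau K A ρ * (ρ * Coalgebra.comul x) - tau K A ρ * (tau K A (Coalgebra.comul x) * ρ)), ?_⟩
    have hcomb : (PowerSeries.X : PowerSeries K) •
        (ρ * Coalgebra.comul x + tau K A ρ * Coalgebra.comul x -
          (Coalgebra.comul x * ρ + Coalgebra.comul x * tau K A ρ) -
          (PowerSeries.X : PowerSeries K) •
            ((ρ * Coalgebra.comul x) * ρ - (tau K A (Coalgebra.comul x) * ρ) * ρ -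
              (tau K A ρ * (ρ * Coalgebra.comul x) -
                tau K A ρ * (tau K A (Coalgebra.comul x) * ρ)))) =
        -((tau K A (Coalgebra.comul x) +
            (PowerSeries.X : PowerSeries K) • (tau K A (Coalgebra.comul x) * ρ)) -
          (Coalgebra.comul x + (PowerSeries.X : PowerSeries K) • (ρ * Coalgebra.comul x))) -
        ((Coalgebra.comul x +
            (PowerSeries.X : PowerSeries K) • (Coalgebra.comul x * tau K A ρ)) -
          (tau K A (Coalgebra.comul x) +
            (PowerSeries.X : PowerSeries K) • (tau K A ρ * tau K A (Coalgebra.comul x)))) +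
        (PowerSeries.X : PowerSeries K) •
          ((tau K A (Coalgebra.comul x) * ρ +
              (PowerSeries.X : PowerSeries K) • ((tau K A (Coalgebra.comul x) * ρ) * ρ)) -
            (Coalgebra.comul x * ρ +
              (PowerSeries.X : PowerSeries K) • ((ρ * Coalgebra.comul x) * ρ))) -
        (PowerSeries.X : PowerSeries K) •
          ((tau K A ρ * tau K A (Coalgebra.comul x) +
              (PowerSeries.X : PowerSeries K) •
                (tau K A ρ * (tau K A (Coalgebra.comul x) * ρ))) -
            (tau K A ρ * Coalgebra.comul x +
              (PowerSeries.X : PowerSeries K) • (tau K A ρ * (ρ * Coalgebra.comul x)))) := by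
      simp only [smul_sub, smul_add, smul_neg, smul_smul]
      abel
    rw [sub_eq_zero_of_eq E1, sub_eq_zero_of_eq E2, sub_eq_zero_of_eq E1r,
      sub_eq_zero_of_eq E1l] at hcomb
    simp only [smul_zero, neg_zero, sub_zero, add_zero, zero_add, zero_sub, neg_neg] at hcomb
    have h1 := htf2 _ hcomb
    rw [add_mul, mul_add]
    exact sub_eq_zero.mp h1


end
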